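/- The constant term of the n-th power of the Laurent polynomial W = X_1 + X_2 + X_3 + X_4 + 1/(X_1 X_2 X_3 X_4) equals (5m)!/(m!)^5 if n = 5m and equals 0 if n is not divisible by 5. -/

import Mathlib

open Finset

/-- The Laurent polynomial `W = X₁ + X₂ + X₃ + X₄ + 1/(X₁X₂X₃X₄)`, realised as an
element of the group algebra of `Fin 4 → ℤ` (multivariate Laurent polynomials). -/
noncomputable def Wquintic : AddMonoidAlgebra ℚ (Fin 4 → ℤ) :=
  (∑ i : Fin 4, AddMonoidAlgebra.single (Pi.single i (1 : ℤ)) (1 : ℚ)) +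
    AddMonoidAlgebra.single (fun _ => (-1 : ℤ)) (1 : ℚ)

def eW : Fin 5 → (Fin 4 → ℤ) :=
  ![Pi.single 0 1, Pi.single 1 1, Pi.single 2 1, Pi.single 3 1, fun _ => -1]

lemma W_eq : Wquintic = ∑ j : Fin 5, AddMonoidAlgebra.single (eW j) (1 : ℚ) := by
  rw [Fin.sum_univ_five]
  unfold Wquintic
  rw [Fin.sum_univ_four]
  simp [eW]

lemma Skey (k : Fin 5 → ℕ) :
    (∑ i : Fin 5, k i • eW i) = 0 ↔ k = fun _ => k 4 := by
  rw [Fin.sum_univ_five]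
  constructor
  · intro h
    have h0 := congrFun h 0
    have h1 := congrFun h 1
    have h2 := congrFun h 2
    have h3 := congrFun h 3
    simp [eW, Pi.single_apply] at h0 h1 h2 h3
    funext j
    fin_cases j <;> simp <;> omega
  · intro h
    have h0 := congrFun h 0
    have h1 := congrFun h 1
    have h2 := congrFun h 2
    have h3 := congrFun h 3
    funext j
    fin_cases j <;> simp [eW, Pi.single_apply, h0, h1, h2, h3]

lemma expandW (n : ℕ) : Wquintic ^ n =
    ∑ k ∈ Finset.piAntidiag Finset.univ n,
      AddMonoidAlgebra.single (∑ i : Fin 5, k i • eW i)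
        ((Nat.multinomial Finset.univ k : ℚ)) := by
  rw [W_eq, Finset.sum_pow_eq_sum_piAntidiag]
  refine Finset.sum_congr rfl fun k hk => ?_
  simp_rw [AddMonoidAlgebra.single_pow, one_pow, AddMonoidAlgebra.prod_single,
    Finset.prod_const_one]
  rw [← nsmul_eq_mul, AddMonoidAlgebra.smul_single, nsmul_eq_mul, mul_one]

lemma coeffW (n : ℕ) : (Wquintic ^ n).coeff 0 =
    ∑ k ∈ Finset.piAntidiag Finset.univ n,
      if (∑ i : Fin 5, k i • eW i) = 0 then (Nat.multinomial Finset.univ k : ℚ) else 0 := by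
  rw [expandW, AddMonoidAlgebra.coeff_sum, Finsupp.finset_sum_apply]
  exact Finset.sum_congr rfl fun k hk => Finsupp.single_apply

/-- The constant term of `Wⁿ` equals `(5m)!/(m!)^5` when `n = 5m`, and `0` when
`5 ∤ n`. -/
theorem constant_term_W_pow :
    (∀ m : ℕ, (Wquintic ^ (5 * m)).coeff 0 = ((5 * m).factorial : ℚ) / ((m.factorial : ℚ)) ^ 5) ∧
    (∀ n : ℕ, ¬ (5 ∣ n) → (Wquintic ^ n).coeff 0 = 0) := by
  have key : ∀ (b : Fin 5 → ℕ) (n : ℕ), b ∈ Finset.piAntidiag Finset.univ n →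
      (∑ i : Fin 5, b i • eW i) = 0 → n = 5 * b 4 ∧ b = fun _ => b 4 := by
    intro b n hb h
    have hc := (Skey b).1 h
    have hs := (Finset.mem_piAntidiag.1 hb).1
    rw [hc] at hs
    simp [Finset.sum_const, Finset.card_univ] at hs
    exact ⟨hs.symm, hc⟩
    
  constructor
  · intro m
    rw [coeffW]
    rw [Finset.sum_eq_single_of_mem (fun _ : Fin 5 => m)]
    · rw [if_pos ((Skey _).2 rfl)]
      have hs := Nat.multinomial_spec Finset.univ (fun _ : Fin 5 => m)
      simp only [Finset.prod_const, Finset.sum_const, Finset.card_univ, Fintype.card_fin,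
        smul_eq_mul] at hs
      have hm : (m.factorial : ℚ) ≠ 0 := Nat.cast_ne_zero.2 (Nat.factorial_ne_zero m)
      rw [eq_div_iff (pow_ne_zero 5 hm)]
      push_cast [← hs]
      ring
    · simp [Finset.mem_piAntidiag, Finset.sum_const, Finset.card_univ]
    · intro b hb hne
      rw [if_neg]
      intro h
      obtain ⟨h1, h2⟩ := key b (5 * m) hb h
      apply hne
      rw [h2]
      have : b 4 = m := by omega
      rw [this]
  · intro n hn
    rw [coeffW]
    apply Finset.sum_eq_zero
    intro k hk
    rw [if_neg]
    intro h
    exact hn ⟨k 4, (key k n hk h).1⟩
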